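/- If e_1 < e_2 (in particular the set S defining e_2 is nonempty), then Case b2) holds. -/

import Mathlib

open MeasureTheory ProbabilityTheory Filter Finset Topology

noncomputable section

attribute [local instance] Classical.propDecidable

/-- The simplex `Λ` of probability vectors on `{1,…,m}`. -/
def Lam (m : ℕ) : Set (Fin m → ℝ) := {l | (∀ i, 0 ≤ l i) ∧ ∑ i, l i = 1}

/-- `f(λ^X, λ^Y) = Σ_i min (p^X_i λ^X_i) (p^Y_i λ^Y_i)`. -/
def fobj {m : ℕ} (pX pY : Fin m → ℝ) (l : (Fin m → ℝ) × (Fin m → ℝ)) : ℝ :=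
  ∑ i, min (pX i * l.1 i) (pY i * l.2 i)

/-- `e_max`, the maximum of `f` over `Λ²`. -/
def emax {m : ℕ} (pX pY : Fin m → ℝ) : ℝ :=
  sSup (fobj pX pY '' (Lam m ×ˢ Lam m))

/-- The set `U`. -/
def Uset {m : ℕ} (pX pY : Fin m → ℝ) : Set (Fin m → ℝ) :=
  {u | (∀ i, 0 ≤ u i) ∧ (∑ i, u i / pX i) ≤ 1 ∧ (∑ i, u i / pY i) ≤ 1}

/-- The set `L_U` of maximizers of `φ(u) = Σ_i u_i` over `U`. -/
def LU {m : ℕ} (pX pY : Fin m → ℝ) : Set (Fin m → ℝ) :=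
  {u ∈ Uset pX pY | ∑ i, u i = emax pX pY}

/-- The set `I` of letters usable in a maximizer. -/
def Iset {m : ℕ} (pX pY : Fin m → ℝ) : Set (Fin m) :=
  {i | ∃ u ∈ LU pX pY, 0 < u i}

/-- Case a): some maximizer saturates the `X` constraint but not the `Y` one. -/
def CaseA {m : ℕ} (pX pY : Fin m → ℝ) : Prop :=
  ∃ u ∈ LU pX pY, (∑ i, u i / pX i) = 1 ∧ (∑ i, u i / pY i) < 1

/-- Case b): every maximizer saturates both constraints. -/
def CaseB {m : ℕ} (pX pY : Fin m → ℝ) : Prop :=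
  ∀ u ∈ LU pX pY, (∑ i, u i / pX i) = 1 ∧ (∑ i, u i / pY i) = 1

/-- Case b1): Case b) and the vectors `(1/p^X_i)_{i∈I}` and `(1/p^Y_i)_{i∈I}` coincide. -/
def CaseB1 {m : ℕ} (pX pY : Fin m → ℝ) : Prop :=
  CaseB pX pY ∧ ∀ i ∈ Iset pX pY, (pX i)⁻¹ = (pY i)⁻¹

/-- Case b2): Case b) and the vectors `(1/p^X_i)_{i∈I}` and `(1/p^Y_i)_{i∈I}` differ. -/
def CaseB2 {m : ℕ} (pX pY : Fin m → ℝ) : Prop :=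
  CaseB pX pY ∧ ¬ (∀ i ∈ Iset pX pY, (pX i)⁻¹ = (pY i)⁻¹)

/-- The set `K_{Λ²}` of maximizers of `f` over `Λ²`. -/
def Kset {m : ℕ} (pX pY : Fin m → ℝ) : Set ((Fin m → ℝ) × (Fin m → ℝ)) :=
  {l ∈ Lam m ×ˢ Lam m | fobj pX pY l = emax pX pY}

/-- `p^X_max`. -/
def pXmax {m : ℕ} (pX : Fin m → ℝ) : ℝ := ⨆ i, pX i

/-- The set `J` (Case a)). -/
def Jset {m : ℕ} (pX pY : Fin m → ℝ) : Set (Fin m → ℝ) :=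
  {l ∈ Lam m | (∀ i ∉ Iset pX pY, l i = 0) ∧
    (∑ i ∈ Finset.univ.filter (· ∈ Iset pX pY), l i / pY i) ≤ 1 / pXmax pX}

/-- `E = {x : Σ_i x_i = 0}`. -/
def Eset (m : ℕ) : Set (Fin m → ℝ) := {x | ∑ i, x i = 0}

/-- `E' = {x ∈ E : x_i ≥ 0 for i ∉ I}`. -/
def E'set {m : ℕ} (pX pY : Fin m → ℝ) : Set (Fin m → ℝ) :=
  {x ∈ Eset m | ∀ i ∉ Iset pX pY, 0 ≤ x i}

/-- The function `𝔪` of Lemma 1.4. -/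
def mfrak {m : ℕ} (pX pY : Fin m → ℝ) (ν : (Fin m → ℝ) × (Fin m → ℝ)) : ℝ :=
  sSup ((fun x : (Fin m → ℝ) × (Fin m → ℝ) =>
      ∑ i, min (pX i * x.1 i + ν.1 i) (pY i * x.2 i + ν.2 i)) ''
    (E'set pX pY ×ˢ E'set pX pY))

/-- Partial sum `λ_1 + … + λ_i`. -/
def psumLe {m : ℕ} (l : Fin m → ℝ) (i : Fin m) : ℝ :=
  ∑ j ∈ Finset.univ.filter (· ≤ i), l j

/-- Partial sum `λ_1 + … + λ_{i-1}`. -/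
def psumLt {m : ℕ} (l : Fin m → ℝ) (i : Fin m) : ℝ :=
  ∑ j ∈ Finset.univ.filter (· < i), l j

/-- `e(i,j)`. -/
def eij {m : ℕ} (pX pY : Fin m → ℝ) (i j : Fin m) : ℝ :=
  (pX i * pY i * (pX j - pY j) + pX j * pY j * (pY i - pX i)) /
    (pY i * pX j - pX i * pY j)

/-- The set `S` of admissible pairs `(i,j)` in the representation of `e_max`. -/
def Sset {m : ℕ} (pX pY : Fin m → ℝ) : Set (Fin m × Fin m) :=
  {ij | pX ij.1 < pX ij.2 ∧ pY ij.2 < pY ij.1 ∧ pX ij.1 < pY ij.1 ∧ pY ij.2 < pX ij.2}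

/-- `e_1 = max_i min(p^X_i, p^Y_i)`. -/
def e1 {m : ℕ} (pX pY : Fin m → ℝ) : ℝ := ⨆ i, min (pX i) (pY i)

/-- `e_2 = max_{(i,j)∈S} e(i,j)` (with `sSup ∅ = 0` when `S` is empty). -/
def e2 {m : ℕ} (pX pY : Fin m → ℝ) : ℝ :=
  sSup ((fun ij : Fin m × Fin m => eij pX pY ij.1 ij.2) '' Sset pX pY)


/-! ### Auxiliary lemmas -/

/-- Every `u ∈ U` has `∑ u ≤ e_max`. -/
lemma aux_sum_le_emax {m : ℕ} (hm : 0 < m) (pX pY : Fin m → ℝ)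
    (hpX : ∀ i, 0 < pX i) (hpY : ∀ i, 0 < pY i)
    (u : Fin m → ℝ) (hu0 : ∀ i, 0 ≤ u i)
    (huX : ∑ i, u i / pX i ≤ 1) (huY : ∑ i, u i / pY i ≤ 1) :
    ∑ i, u i ≤ emax pX pY := by
  set i0 : Fin m := ⟨0, hm⟩ with hi0
  set lX : Fin m → ℝ :=
    fun i => u i / pX i + (if i = i0 then 1 - ∑ j, u j / pX j else 0) with hlX
  set lY : Fin m → ℝ :=
    fun i => u i / pY i + (if i = i0 then 1 - ∑ j, u j / pY j else 0) with hlY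
  have hslackX : ∀ i, 0 ≤ (if i = i0 then 1 - ∑ j, u j / pX j else 0) := by
    intro i; split
    · linarith
    · exact le_rfl
  have hslackY : ∀ i, 0 ≤ (if i = i0 then 1 - ∑ j, u j / pY j else 0) := by
    intro i; split
    · linarith
    · exact le_rfl
  have hlXmem : lX ∈ Lam m := by
    constructor
    · intro i
      exact add_nonneg (div_nonneg (hu0 i) (hpX i).le) (hslackX i)
    · rw [hlX]
      rw [Finset.sum_add_distrib]
      simp [Finset.sum_ite_eq']
  have hlYmem : lY ∈ Lam m := by
    constructor
    · intro i
      exact add_nonneg (div_nonneg (hu0 i) (hpY i).le) (hslackY i)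
    · rw [hlY]
      rw [Finset.sum_add_distrib]
      simp [Finset.sum_ite_eq']
  have hle : ∑ i, u i ≤ fobj pX pY (lX, lY) := by
    apply Finset.sum_le_sum
    intro i _
    have h1 : pX i * (u i / pX i) = u i := by
      rw [← mul_div_assoc]; exact mul_div_cancel_left₀ _ (hpX i).ne'
    have h2 : pY i * (u i / pY i) = u i := by
      rw [← mul_div_assoc]; exact mul_div_cancel_left₀ _ (hpY i).ne'
    apply le_min
    · simp only [hlX, mul_add, h1]
      have := mul_nonneg (hpX i).le (hslackX i)
      linarith
    · simp only [hlY, mul_add, h2]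
      have := mul_nonneg (hpY i).le (hslackY i)
      linarith
  refine hle.trans (le_csSup ?_ ?_)
  · refine ⟨∑ i, pX i, ?_⟩
    rintro y ⟨l, ⟨⟨hl10, hl1s⟩, hl20, hl2s⟩, rfl⟩
    apply Finset.sum_le_sum
    intro i _
    refine (min_le_left _ _).trans ?_
    have hli : l.1 i ≤ 1 := by
      have := Finset.single_le_sum (f := l.1) (fun j _ => hl10 j)
        (Finset.mem_univ i)
      linarith
    nlinarith [hl10 i, (hpX i).le]
  · exact ⟨(lX, lY), ⟨hlXmem, hlYmem⟩, rfl⟩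

/-- The set `L_U` is nonempty. -/
lemma aux_LU_nonempty {m : ℕ} (hm : 0 < m) (pX pY : Fin m → ℝ)
    (hpX : ∀ i, 0 < pX i) (hpY : ∀ i, 0 < pY i) :
    (LU pX pY).Nonempty := by
  have hUclosed : IsClosed (Uset pX pY) := by
    have hA : IsClosed {u : Fin m → ℝ | ∀ i, 0 ≤ u i} := by
      have : {u : Fin m → ℝ | ∀ i, 0 ≤ u i} = ⋂ i, {u | 0 ≤ u i} := by
        ext u; simp
      rw [this]
      exact isClosed_iInter fun i => isClosed_le continuous_const (continuous_apply i)
    have hB : IsClosed {u : Fin m → ℝ | ∑ i, u i / pX i ≤ 1} :=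
      isClosed_le (continuous_finset_sum _ fun i _ => (continuous_apply i : Continuous fun u : Fin m → ℝ => u i).div_const (pX i))
        continuous_const
    have hC : IsClosed {u : Fin m → ℝ | ∑ i, u i / pY i ≤ 1} :=
      isClosed_le (continuous_finset_sum _ fun i _ => (continuous_apply i : Continuous fun u : Fin m → ℝ => u i).div_const (pY i))
        continuous_const
    have : Uset pX pY = {u : Fin m → ℝ | ∀ i, 0 ≤ u i} ∩
        ({u : Fin m → ℝ | ∑ i, u i / pX i ≤ 1} ∩ {u : Fin m → ℝ | ∑ i, u i / pY i ≤ 1}) := rfl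
    rw [this]
    exact hA.inter (hB.inter hC)
  have hUsub : Uset pX pY ⊆ Set.pi Set.univ (fun i => Set.Icc (0:ℝ) (pX i)) := by
    rintro u ⟨h0, hX, _⟩ i _
    refine ⟨h0 i, ?_⟩
    have h1 : u i / pX i ≤ ∑ j, u j / pX j :=
      Finset.single_le_sum (f := fun j => u j / pX j)
        (fun j _ => div_nonneg (h0 j) (hpX j).le) (Finset.mem_univ i)
    have h2 := h1.trans hX
    rwa [div_le_one (hpX i)] at h2
  have hUcompact : IsCompact (Uset pX pY) :=
    (isCompact_univ_pi fun i => isCompact_Icc).of_isClosed_subset hUclosed hUsub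
  have hUne : (Uset pX pY).Nonempty := by
    refine ⟨0, fun i => le_rfl, ?_, ?_⟩ <;> simp
  obtain ⟨u, huU, humax⟩ := hUcompact.exists_isMaxOn hUne
    (continuous_finset_sum _ fun i _ => continuous_apply i).continuousOn
  refine ⟨u, huU, le_antisymm
    (aux_sum_le_emax hm pX pY hpX hpY u huU.1 huU.2.1 huU.2.2) ?_⟩
  have hsum0 : (0:ℝ) ≤ ∑ i, u i := Finset.sum_nonneg fun i _ => huU.1 i
  apply Real.sSup_le _ hsum0
  rintro y ⟨l, ⟨⟨hl10, hl1s⟩, hl20, hl2s⟩, rfl⟩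
  set w : Fin m → ℝ := fun i => min (pX i * l.1 i) (pY i * l.2 i) with hw
  have hwU : w ∈ Uset pX pY := by
    refine ⟨fun i => le_min (mul_nonneg (hpX i).le (hl10 i)) (mul_nonneg (hpY i).le (hl20 i)),
      ?_, ?_⟩
    · calc ∑ i, w i / pX i ≤ ∑ i, l.1 i := by
            apply Finset.sum_le_sum
            intro i _
            rw [div_le_iff₀ (hpX i)]
            rw [mul_comm]
            exact min_le_left _ _
        _ = 1 := hl1s
    · calc ∑ i, w i / pY i ≤ ∑ i, l.2 i := by
            apply Finset.sum_le_sum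
            intro i _
            rw [div_le_iff₀ (hpY i)]
            rw [mul_comm]
            exact min_le_right _ _
        _ = 1 := hl2s
  exact humax hwU

/-- For `(i,j) ∈ S`, `e(i,j) ≤ e_max`. -/
lemma aux_eij_le_emax {m : ℕ} (hm : 0 < m) (pX pY : Fin m → ℝ)
    (hpX : ∀ i, 0 < pX i) (hpY : ∀ i, 0 < pY i)
    (i j : Fin m) (hij : (i, j) ∈ Sset pX pY) :
    eij pX pY i j ≤ emax pX pY := by
  obtain ⟨h1, h2, h3, h4⟩ := hij
  simp only at h1 h2 h3 h4
  have hne : i ≠ j := fun h => absurd (h ▸ h1) (lt_irrefl _)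
  set D : ℝ := pY i * pX j - pX i * pY j with hD
  have hDpos : 0 < D := by
    have := hpX i; have := hpX j; have := hpY i; have := hpY j
    nlinarith
  set a : ℝ := pX i * pY i * (pX j - pY j) / D with ha
  set b : ℝ := pX j * pY j * (pY i - pX i) / D with hb
  have ha0 : 0 ≤ a :=
    div_nonneg (mul_pos (mul_pos (hpX i) (hpY i)) (sub_pos.mpr h4)).le hDpos.le
  have hb0 : 0 ≤ b :=
    div_nonneg (mul_pos (mul_pos (hpX j) (hpY j)) (sub_pos.mpr h3)).le hDpos.le
  set u : Fin m → ℝ := fun k => (if k = i then a else 0) + (if k = j then b else 0) with hu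
  have hu0 : ∀ k, 0 ≤ u k := by
    intro k
    apply add_nonneg <;> split <;> first | assumption | exact le_rfl
  have hsum : ∀ p : Fin m → ℝ, ∑ k, u k / p k = a / p i + b / p j := by
    intro p
    have : ∀ k, u k / p k =
        (if k = i then a / p i else 0) + (if k = j then b / p j else 0) := by
      intro k
      rw [hu]
      simp only
      rw [add_div]
      congr 1 <;> (split <;> simp_all)
    rw [Finset.sum_congr rfl fun k _ => this k, Finset.sum_add_distrib]
    simp [Finset.sum_ite_eq']
  have hXeq : a / pX i + b / pX j = 1 := by
    rw [ha, hb, hD]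
    have hxi := (hpX i).ne'
    have hxj := (hpX j).ne'
    have hd : pY i * pX j - pX i * pY j ≠ 0 := by rw [← hD]; exact hDpos.ne'
    field_simp
    ring
  have hYeq : a / pY i + b / pY j = 1 := by
    rw [ha, hb, hD]
    have hyi := (hpY i).ne'
    have hyj := (hpY j).ne'
    have hd : pY i * pX j - pX i * pY j ≠ 0 := by rw [← hD]; exact hDpos.ne'
    field_simp
    ring
  have husum : ∑ k, u k = eij pX pY i j := by
    have : ∑ k, u k = a + b := by
      rw [hu, Finset.sum_add_distrib]
      simp [Finset.sum_ite_eq']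
    rw [this, ha, hb, eij, hD, ← add_div]
  calc eij pX pY i j = ∑ k, u k := husum.symm
    _ ≤ emax pX pY := by
        apply aux_sum_le_emax hm pX pY hpX hpY u hu0
        · rw [hsum pX, hXeq]
        · rw [hsum pY, hYeq]

/-- LP slackness: if a maximizer has slack in the `p`-constraint, then `q i = M` at
some supported letter with `q i < p i`. -/
lemma aux_slack {m : ℕ} (p q : Fin m → ℝ)
    (hp : ∀ i, 0 < p i) (hq : ∀ i, 0 < q i)
    (M : ℝ) (hM : 0 < M)
    (u : Fin m → ℝ) (hu0 : ∀ i, 0 ≤ u i)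
    (hup : ∑ i, u i / p i < 1) (huq : ∑ i, u i / q i ≤ 1)
    (husum : ∑ i, u i = M)
    (hmax : ∀ v : Fin m → ℝ, (∀ i, 0 ≤ v i) → ∑ i, v i / p i ≤ 1 →
      ∑ i, v i / q i ≤ 1 → ∑ i, v i ≤ M) :
    ∃ i, M ≤ min (p i) (q i) := by
  -- claim: the p-constraint can be dropped
  have claim : ∀ v : Fin m → ℝ, (∀ i, 0 ≤ v i) → ∑ i, v i / q i ≤ 1 → ∑ i, v i ≤ M := by
    intro v hv0 hvq
    set A := ∑ i, u i / p i with hA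
    set B := ∑ i, v i / p i with hB
    by_cases hBA : B ≤ 1
    · exact hmax v hv0 hBA hvq
    · push_neg at hBA
      set t : ℝ := (1 - A) / (B - A) with ht
      have hBApos : 0 < B - A := by linarith
      have ht0 : 0 < t := div_pos (by linarith) hBApos
      have ht1 : t ≤ 1 := by
        rw [ht, div_le_one hBApos]; linarith
      set w : Fin m → ℝ := fun i => (1 - t) * u i + t * v i with hw
      have hw0 : ∀ i, 0 ≤ w i := fun i =>
        add_nonneg (mul_nonneg (by linarith) (hu0 i)) (mul_nonneg ht0.le (hv0 i))
      have hsplit : ∀ r : Fin m → ℝ, ∑ i, w i / r i =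
          (1 - t) * (∑ i, u i / r i) + t * (∑ i, v i / r i) := by
        intro r
        rw [Finset.mul_sum, Finset.mul_sum, ← Finset.sum_add_distrib]
        apply Finset.sum_congr rfl
        intro k _
        rw [hw]
        simp only
        rw [add_div, mul_div_assoc, mul_div_assoc]
      have hwp : ∑ i, w i / p i ≤ 1 := by
        rw [hsplit p, ← hA, ← hB]
        have : t * (B - A) = 1 - A := div_mul_cancel₀ _ hBApos.ne'
        nlinarith
      have hwq : ∑ i, w i / q i ≤ 1 := by
        rw [hsplit q]
        nlinarith
      have hwsum : ∑ i, w i = (1 - t) * M + t * ∑ i, v i := by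
        rw [hw, Finset.sum_add_distrib, ← Finset.mul_sum, ← Finset.mul_sum, husum]
      have := hmax w hw0 hwp hwq
      rw [hwsum] at this
      nlinarith
  -- hence q k ≤ M for every k
  have hqM : ∀ k, q k ≤ M := by
    intro k
    set v : Fin m → ℝ := fun i => if i = k then q k else 0 with hv
    have hv0 : ∀ i, 0 ≤ v i := by
      intro i; simp only [hv]; split
      · exact (hq k).le
      · exact le_rfl
    have hvq : ∑ i, v i / q i ≤ 1 := by
      have heq : ∀ i, v i / q i = if i = k then 1 else 0 := by
        intro i
        by_cases h : i = k
        · subst h; simp only [hv, if_pos rfl]; exact div_self (hq i).ne'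
        · simp only [hv, if_neg h]; exact zero_div _
      rw [Finset.sum_congr rfl fun i _ => heq i]
      simp [Finset.sum_ite_eq']
    have hcl := claim v hv0 hvq
    have hvsum : ∑ i, v i = q k := by
      simp only [hv]; simp [Finset.sum_ite_eq']
    rw [hvsum] at hcl
    exact hcl
  -- equality analysis: T := ∑ u/q, then T = 1 and supp u ⊆ {q = M}
  have hterm_le : ∀ i ∈ Finset.univ, u i ≤ u i / q i * M := by
    intro i _
    have h1 : u i / q i * q i = u i := div_mul_cancel₀ _ (hq i).ne'
    calc u i = u i / q i * q i := h1.symm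
      _ ≤ u i / q i * M := by
          apply mul_le_mul_of_nonneg_left (hqM i) (div_nonneg (hu0 i) (hq i).le)
  have hsum_le : M ≤ (∑ i, u i / q i) * M := by
    calc M = ∑ i, u i := husum.symm
      _ ≤ ∑ i, u i / q i * M := Finset.sum_le_sum hterm_le
      _ = (∑ i, u i / q i) * M := by rw [Finset.sum_mul]
  have hT1 : ∑ i, u i / q i = 1 := by
    have h1 : (∑ i, u i / q i) * M ≤ 1 * M := mul_le_mul_of_nonneg_right huq hM.le
    have h2 : 1 * M ≤ (∑ i, u i / q i) * M := by linarith [hsum_le]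
    have := le_antisymm h1 h2
    exact mul_right_cancel₀ hM.ne' this
  have hsum_eq : ∑ i, u i = ∑ i, u i / q i * M := by
    rw [← Finset.sum_mul, hT1, one_mul, husum]
  have heach : ∀ i ∈ Finset.univ, u i = u i / q i * M :=
    (Finset.sum_eq_sum_iff_of_le hterm_le).mp hsum_eq
  -- find a letter with strict inequality between the two constraints
  have hlt : ∑ i, u i / p i < ∑ i, u i / q i := by rw [hT1]; exact hup
  obtain ⟨i, _, hi⟩ := Finset.exists_lt_of_sum_lt hlt
  have hui : 0 < u i := by
    rcases lt_or_eq_of_le (hu0 i) with h | h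
    · exact h
    · exfalso; rw [← h] at hi; simp at hi
  have hqp : q i < p i := by
    by_contra hcon
    push_neg at hcon
    have : u i / q i ≤ u i / p i := by
      gcongr
      exact hp i
    linarith
  have hqiM : q i = M := by
    have h := heach i (Finset.mem_univ i)
    have h2 : u i * q i = u i * M := by
      have h3 : u i * q i = u i / q i * M * q i := by rw [← h]
      rw [h3, mul_right_comm, div_mul_cancel₀ _ (hq i).ne']
    exact mul_left_cancel₀ hui.ne' h2
  exact ⟨i, by rw [min_eq_right hqp.le, hqiM]⟩

/-- Criterion: if `S` is nonempty and `e_1 < e_2`, then Case b2) holds. -/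
theorem criterion_e1_lt_e2
    (m : ℕ) (hm : 2 ≤ m)
    (pX pY : Fin m → ℝ)
    (hpX : ∀ i, 0 < pX i) (hpY : ∀ i, 0 < pY i)
    (hpXsum : ∑ i, pX i = 1) (hpYsum : ∑ i, pY i = 1)
    (hS : (Sset pX pY).Nonempty)
    (hlt : e1 pX pY < e2 pX pY) :
    CaseB2 pX pY := by
  have hm0 : 0 < m := by omega
  haveI : Nonempty (Fin m) := ⟨⟨0, hm0⟩⟩
  -- `e2 ≤ emax`
  have he2 : e2 pX pY ≤ emax pX pY := by
    have h0 : (0:ℝ) ≤ emax pX pY := by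
      have := aux_sum_le_emax hm0 pX pY hpX hpY 0 (fun i => le_rfl) (by simp) (by simp)
      simpa using this
    apply Real.sSup_le _ h0
    rintro y ⟨ij, hij, rfl⟩
    exact aux_eij_le_emax hm0 pX pY hpX hpY ij.1 ij.2 hij
  -- `min (pX i) (pY i) ≤ e1`
  have he1 : ∀ i, min (pX i) (pY i) ≤ e1 pX pY := by
    intro i
    rw [e1]
    exact le_ciSup (f := fun j => min (pX j) (pY j))
      (Set.Finite.bddAbove (Set.finite_range _)) i
  have hemax_pos : 0 < emax pX pY := by
    have h := he1 ⟨0, hm0⟩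
    have hmin : 0 < min (pX ⟨0, hm0⟩) (pY ⟨0, hm0⟩) := lt_min (hpX _) (hpY _)
    linarith
  have hmaxU : ∀ v : Fin m → ℝ, (∀ i, 0 ≤ v i) → ∑ i, v i / pX i ≤ 1 →
      ∑ i, v i / pY i ≤ 1 → ∑ i, v i ≤ emax pX pY :=
    fun v h0 h1 h2 => aux_sum_le_emax hm0 pX pY hpX hpY v h0 h1 h2
  -- Case b) holds
  have hB : CaseB pX pY := by
    rintro u ⟨⟨hu0, huX, huY⟩, husum⟩
    constructor
    · by_contra hne
      have hX' : ∑ i, u i / pX i < 1 := lt_of_le_of_ne huX hne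
      obtain ⟨i, hi⟩ := aux_slack pX pY hpX hpY (emax pX pY) hemax_pos u hu0 hX' huY
        husum hmaxU
      have := he1 i
      linarith
    · by_contra hne
      have hY' : ∑ i, u i / pY i < 1 := lt_of_le_of_ne huY hne
      obtain ⟨i, hi⟩ := aux_slack pY pX hpY hpX (emax pX pY) hemax_pos u hu0 hY' huX
        husum (fun v h0 h1 h2 => hmaxU v h0 h2 h1)
      rw [min_comm] at hi
      have := he1 i
      linarith
  refine ⟨hB, ?_⟩
  intro hall
  obtain ⟨u, huLU⟩ := aux_LU_nonempty hm0 pX pY hpX hpY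
  obtain ⟨⟨hu0, huX, huY⟩, husum⟩ := huLU
  have hX1 : ∑ i, u i / pX i = 1 := (hB u ⟨⟨hu0, huX, huY⟩, husum⟩).1
  -- a supported letter `k` with `emax ≤ pX k`
  have hsupp : ∃ k, 0 < u k ∧ emax pX pY ≤ pX k := by
    by_contra hcon
    push_neg at hcon
    have hne0 : ∃ k, u k ≠ 0 := by
      by_contra hz
      push_neg at hz
      have hzero : ∑ i, u i = 0 := Finset.sum_eq_zero (fun i _ => hz i)
      rw [husum] at hzero
      linarith
    obtain ⟨k0, hk0⟩ := hne0
    have hk0pos : 0 < u k0 := lt_of_le_of_ne (hu0 k0) (Ne.symm hk0)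
    have hstrict : ∑ i, u i < ∑ i, u i / pX i * emax pX pY := by
      apply Finset.sum_lt_sum
      · intro i _
        rcases (hu0 i).lt_or_eq with h | h
        · calc u i = u i / pX i * pX i := (div_mul_cancel₀ _ (hpX i).ne').symm
            _ ≤ u i / pX i * emax pX pY :=
                mul_le_mul_of_nonneg_left (hcon i h).le (div_nonneg (hu0 i) (hpX i).le)
        · rw [← h]; simp
      · refine ⟨k0, Finset.mem_univ k0, ?_⟩
        calc u k0 = u k0 / pX k0 * pX k0 := (div_mul_cancel₀ _ (hpX k0).ne').symm
          _ < u k0 / pX k0 * emax pX pY :=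
              mul_lt_mul_of_pos_left (hcon k0 hk0pos) (div_pos hk0pos (hpX k0))
    rw [← Finset.sum_mul, hX1, one_mul, husum] at hstrict
    exact lt_irrefl _ hstrict
  obtain ⟨k, hk, hkX⟩ := hsupp
  have hkI : k ∈ Iset pX pY := ⟨u, ⟨⟨hu0, huX, huY⟩, husum⟩, hk⟩
  have hinv := hall k hkI
  have hpk : pX k = pY k := inv_injective hinv
  have h1 := he1 k
  rw [← hpk, min_self] at h1
  linarith

end
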